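/- For the massive Gross–Neveu soliton U_ω with ω ∈ (0,1), the pointwise identity Im(conj(U_ω(x)) U_ω'(x)) = −(1−ω²)²/(1 + ω cosh(2μx))² holds for all x ∈ ℝ, where μ = √(1−ω²). -/

import Mathlib

/-- The massive Gross–Neveu line soliton profile. -/
noncomputable def grossNeveuSoliton (ω x : ℝ) : ℂ :=
  (↑(Real.sqrt (1 - ω ^ 2)) : ℂ) *
    ((↑(Real.sqrt (1 + ω) * Real.cosh (Real.sqrt (1 - ω ^ 2) * x)) : ℂ)
      - Complex.I * (↑(Real.sqrt (1 - ω) * Real.sinh (Real.sqrt (1 - ω ^ 2) * x)) : ℂ)) /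
    (↑(1 + ω * Real.cosh (2 * Real.sqrt (1 - ω ^ 2) * x)) : ℂ)

/-- Pointwise identity Im(conj(U_ω) U_ω') = −(1−ω²)²/(1+ω cosh(2μx))², μ = √(1−ω²). -/
theorem grossNeveuSoliton_im_identity (ω : ℝ) (hω : ω ∈ Set.Ioo (0 : ℝ) 1) (x : ℝ) :
    ((starRingEnd ℂ) (grossNeveuSoliton ω x) * deriv (grossNeveuSoliton ω) x).im
      = -((1 - ω ^ 2) ^ 2 / (1 + ω * Real.cosh (2 * Real.sqrt (1 - ω ^ 2) * x)) ^ 2) := by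
  obtain ⟨hω0, hω1⟩ := hω
  set μ : ℝ := Real.sqrt (1 - ω ^ 2) with hμdef
  have hμsq : μ ^ 2 = 1 - ω ^ 2 := by
    rw [hμdef, Real.sq_sqrt]; nlinarith
  -- real part and imaginary part functions
  set f : ℝ → ℝ := fun y => μ * (Real.sqrt (1 + ω) * Real.cosh (μ * y)) /
      (1 + ω * Real.cosh (2 * μ * y)) with hf
  set g : ℝ → ℝ := fun y => -(μ * (Real.sqrt (1 - ω) * Real.sinh (μ * y))) /
      (1 + ω * Real.cosh (2 * μ * y)) with hg
  have hDpos : ∀ y : ℝ, 0 < 1 + ω * Real.cosh (2 * μ * y) := by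
    intro y
    have := Real.one_le_cosh (2 * μ * y)
    nlinarith
  have hD : ∀ y : ℝ, (1 + ω * Real.cosh (2 * μ * y)) ≠ 0 := fun y => (hDpos y).ne'
  have hFeq : grossNeveuSoliton ω = fun y => (f y : ℂ) + (g y : ℂ) * Complex.I := by
    funext y
    rw [grossNeveuSoliton]
    have hDy := hD y
    rw [hf, hg]
    push_cast
    have : ((1 : ℂ) + ω * Real.cosh (2 * μ * y)) ≠ 0 := by
      exact_mod_cast Complex.ofReal_ne_zero.mpr hDy
    field_simp
    rw [← hμdef]; ring_nf
  -- derivatives of f and g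
  have hDder : ∀ y : ℝ, HasDerivAt (fun z => 1 + ω * Real.cosh (2 * μ * z))
      (ω * (Real.sinh (2 * μ * y) * (2 * μ))) y := by
    intro y
    have h1 : HasDerivAt (fun z : ℝ => 2 * μ * z) (2 * μ) y := by
      simpa using (hasDerivAt_id y).const_mul (2 * μ)
    exact ((Real.hasDerivAt_cosh (2 * μ * y)).comp y h1).const_mul ω |>.const_add 1
  have hcder : HasDerivAt (fun z : ℝ => Real.cosh (μ * z)) (Real.sinh (μ * x) * μ) x := by
    have h1 : HasDerivAt (fun z : ℝ => μ * z) μ x := by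
      simpa using (hasDerivAt_id x).const_mul μ
    exact (Real.hasDerivAt_cosh (μ * x)).comp x h1
  have hsder : HasDerivAt (fun z : ℝ => Real.sinh (μ * z)) (Real.cosh (μ * x) * μ) x := by
    have h1 : HasDerivAt (fun z : ℝ => μ * z) μ x := by
      simpa using (hasDerivAt_id x).const_mul μ
    exact (Real.hasDerivAt_sinh (μ * x)).comp x h1
  set a : ℝ := Real.sqrt (1 + ω) with ha
  set b : ℝ := Real.sqrt (1 - ω) with hb
  set c : ℝ := Real.cosh (μ * x)
  set s : ℝ := Real.sinh (μ * x)
  set S2 : ℝ := Real.sinh (2 * μ * x)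
  set D : ℝ := 1 + ω * Real.cosh (2 * μ * x) with hDdef
  have hab : a * b = μ := by
    rw [ha, hb, ← Real.sqrt_mul (by linarith), hμdef]
    ring_nf
  set f' : ℝ := (μ * (a * (s * μ)) * D - μ * (a * c) * (ω * (S2 * (2 * μ)))) / D ^ 2 with hf'
  set g' : ℝ := (-(μ * (b * (c * μ))) * D - -(μ * (b * s)) * (ω * (S2 * (2 * μ)))) / D ^ 2 with hg'
  have hfd : HasDerivAt f f' x := by
    rw [hf, hf']
    exact (((hcder.const_mul a).const_mul μ).div (hDder x) (hD x))
  have hgd : HasDerivAt g g' x := by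
    rw [hg, hg']
    exact ((((hsder.const_mul b).const_mul μ).neg).div (hDder x) (hD x))
  have hUd : HasDerivAt (grossNeveuSoliton ω) ((f' : ℂ) + (g' : ℂ) * Complex.I) x := by
    rw [hFeq]
    exact (hfd.ofReal_comp).add ((hgd.ofReal_comp).mul_const Complex.I)
  rw [hUd.deriv, hFeq]
  have him : (((starRingEnd ℂ) ((f x : ℂ) + (g x : ℂ) * Complex.I)) *
      ((f' : ℂ) + (g' : ℂ) * Complex.I)).im = f x * g' - g x * f' := by
    simp [Complex.ext_iff, Complex.mul_im, Complex.mul_re]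
    ring
  rw [him]
  -- now the real computation
  have hcs : c ^ 2 - s ^ 2 = 1 := Real.cosh_sq_sub_sinh_sq (μ * x)
  have hfx : f x = μ * (a * c) / D := rfl
  have hgx : g x = -(μ * (b * s)) / D := rfl
  have hDne : D ≠ 0 := hD x
  rw [hfx, hgx, hf', hg']
  have key : μ * (a * c) / D * ((-(μ * (b * (c * μ))) * D - -(μ * (b * s)) * (ω * (S2 * (2 * μ)))) / D ^ 2)
      - -(μ * (b * s)) / D * ((μ * (a * (s * μ)) * D - μ * (a * c) * (ω * (S2 * (2 * μ)))) / D ^ 2)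
      = -(μ ^ 3 * (a * b)) / D ^ 2 := by
    field_simp
    linear_combination (-(μ ^ 3 * a * b * (1 + ω * Real.cosh (2 * μ * x)))) * hcs
  rw [key, hab]
  rw [show μ ^ 3 * μ = (μ ^ 2) ^ 2 by ring, hμsq]
  ring
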